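/- Let f ≥ 1 be a natural number, δ > 0, and m, M real numbers with M − m ≥ 2δ. Then there exists a finite set I with card I = 2f and a function v : I → ℝ such that: min over i ∈ I of v(i) = m, max over i ∈ I of v(i) = M, exactly one index has value m, exactly one index has value M, f−1 indices have values in the open interval (m, m+δ), f−1 indices have values in the open interval (M−δ, M), the number of indices i with v(i) ≥ m + δ is at most f, and the number of indices i with v(i) ≤ M − δ is at most f. -/

import Mathlib

/-- the counterexample with `2f` correct nodes showing `n ≥ 3f+1` is
necessary: a distribution of values with one node at `m`, one node at `M`, `f-1` nodes
in `(m, m+δ)`, `f-1` nodes in `(M-δ, M)`, such that at most `f` nodes have a value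
`≥ m + δ` and at most `f` nodes have a value `≤ M - δ`. -/
theorem stmt_10 (f : ℕ) (hf : 1 ≤ f) (δ m M : ℝ) (hδ : 0 < δ) (hgap : 2 * δ ≤ M - m) :
    ∃ (I : Finset ℕ) (v : ℕ → ℝ) (hne : I.Nonempty),
      I.card = 2 * f ∧
      I.inf' hne v = m ∧
      I.sup' hne v = M ∧
      (I.filter (fun i => v i = m)).card = 1 ∧
      (I.filter (fun i => v i = M)).card = 1 ∧
      (I.filter (fun i => m < v i ∧ v i < m + δ)).card = f - 1 ∧
      (I.filter (fun i => M - δ < v i ∧ v i < M)).card = f - 1 ∧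
      (I.filter (fun i => m + δ ≤ v i)).card ≤ f ∧
      (I.filter (fun i => v i ≤ M - δ)).card ≤ f := by
  classical
  set v : ℕ → ℝ := fun i =>
    if i = 0 then m else if i < f then m + δ/2 else if i < 2*f-1 then M - δ/2 else M with hv
  have hne : (Finset.range (2*f)).Nonempty := ⟨0, by simp; omega⟩
  refine ⟨Finset.range (2*f), v, hne, by simp, ?_, ?_, ?_, ?_, ?_, ?_, ?_, ?_⟩
  · apply le_antisymm
    · have h0 : (0 : ℕ) ∈ Finset.range (2*f) := by simp; omega
      have := Finset.inf'_le v h0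
      exact this.trans (by simp [hv])
    · apply Finset.le_inf'
      intro i _
      simp only [hv]
      split_ifs <;> linarith
  · apply le_antisymm
    · apply Finset.sup'_le
      intro i _
      simp only [hv]
      split_ifs <;> linarith
    · have h0 : 2*f-1 ∈ Finset.range (2*f) := by simp; omega
      have := Finset.le_sup' v h0
      have hval : v (2*f-1) = M := by
        simp only [hv]
        split_ifs with h1 h2 h3 <;> [omega; omega; omega; rfl]
      rw [hval] at this
      exact this
  · have : Finset.filter (fun i => v i = m) (Finset.range (2*f)) = {0} := by
      ext i
      simp only [Finset.mem_filter, Finset.mem_range, Finset.mem_singleton, hv]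
      split_ifs with h1 h2 h3
      · constructor <;> intro <;> [exact h1; exact ⟨by omega, rfl⟩]
      · constructor <;> intro h <;> [linarith [h.2]; omega]
      · constructor <;> intro h <;> [linarith [h.2]; omega]
      · constructor <;> intro h <;> [linarith [h.2]; omega]
    rw [this]; simp
  · have : Finset.filter (fun i => v i = M) (Finset.range (2*f)) = {2*f-1} := by
      ext i
      simp only [Finset.mem_filter, Finset.mem_range, Finset.mem_singleton, hv]
      split_ifs with h1 h2 h3
      · constructor <;> intro h <;> [linarith [h.2]; omega]
      · constructor <;> intro h <;> [linarith [h.2]; omega]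
      · constructor <;> intro h <;> [linarith [h.2]; omega]
      · constructor <;> intro h <;> [omega; exact ⟨by omega, rfl⟩]
    rw [this]; simp
  · have : Finset.filter (fun i => m < v i ∧ v i < m + δ) (Finset.range (2*f))
        = Finset.Ico 1 f := by
      ext i
      simp only [Finset.mem_filter, Finset.mem_range, Finset.mem_Ico, hv]
      split_ifs with h1 h2 h3
      · constructor <;> intro h <;> [linarith [h.2.1]; omega]
      · constructor <;> intro h <;> [omega; exact ⟨by omega, by linarith, by linarith⟩]
      · constructor <;> intro h <;> [linarith [h.2.2]; omega]
      · constructor <;> intro h <;> [linarith [h.2.2]; omega]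
    rw [this]; simp
  · have : Finset.filter (fun i => M - δ < v i ∧ v i < M) (Finset.range (2*f))
        = Finset.Ico f (2*f-1) := by
      ext i
      simp only [Finset.mem_filter, Finset.mem_range, Finset.mem_Ico, hv]
      split_ifs with h1 h2 h3
      · constructor <;> intro h <;> [linarith [h.2.1]; omega]
      · constructor <;> intro h <;> [linarith [h.2.1]; omega]
      · constructor <;> intro h <;> [omega; exact ⟨by omega, by linarith, by linarith⟩]
      · constructor <;> intro h <;> [linarith [h.2.2]; omega]
    rw [this]
    rw [Nat.card_Ico]; omega
  · have : Finset.filter (fun i => m + δ ≤ v i) (Finset.range (2*f))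
        = Finset.Ico f (2*f) := by
      ext i
      simp only [Finset.mem_filter, Finset.mem_range, Finset.mem_Ico, hv]
      split_ifs with h1 h2 h3
      · constructor <;> intro h <;> [linarith [h.2]; omega]
      · constructor <;> intro h <;> [linarith [h.2]; omega]
      · constructor <;> intro h <;> [omega; exact ⟨by omega, by linarith⟩]
      · constructor <;> intro h <;> [omega; exact ⟨by omega, by linarith⟩]
    rw [this, Nat.card_Ico]; omega
  · have : Finset.filter (fun i => v i ≤ M - δ) (Finset.range (2*f))
        = Finset.range f := by
      ext i
      simp only [Finset.mem_filter, Finset.mem_range, hv]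
      split_ifs with h1 h2 h3
      · constructor <;> intro h <;> [omega; exact ⟨by omega, by linarith⟩]
      · constructor <;> intro h <;> [omega; exact ⟨by omega, by linarith⟩]
      · constructor <;> intro h <;> [linarith [h.2]; omega]
      · constructor <;> intro h <;> [linarith [h.2]; omega]
    rw [this]; simp
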